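/- Let 0<q<1, k ∈ ℝ, a_1,…,a_r, b_1,…,b_s ≥ 0, and let f be a positive function on (0,∞) satisfying: (i) f(x+1) = ( [x+a_1]_q ⋯ [x+a_r]_q / ([x+b_1]_q ⋯ [x+b_s]_q) )^k f(x) for all x>0; (ii) (1−q)^{k(r−s)x} f(x) is monotone for x>M for some constant M>0; (iii) f(1)=1. Then for all x>0, f(x) = ( ∏_{i=1}^r Γ_q(x+a_i)/Γ_q(1+a_i) · ∏_{j=1}^s Γ_q(1+b_j)/Γ_q(x+b_j) )^k. -/

import Mathlib

open Real Set Filter Topology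

noncomputable def qPochInf (a q : ℝ) : ℝ := ∏' k : ℕ, (1 - a * q ^ k)

noncomputable def qGamma (q x : ℝ) : ℝ :=
  qPochInf q q / qPochInf (q ^ x) q * (1 - q) ^ (1 - x)

noncomputable def qBracket (q x : ℝ) : ℝ := (1 - q ^ x) / (1 - q)

section aux

variable {q c : ℝ}

lemma term_pos (hq0 : 0 < q) (hq1 : q < 1) (hc0 : 0 ≤ c) (hc1 : c < 1) (n : ℕ) :
    0 < 1 - c * q ^ n := by
  have h1 : q ^ n ≤ 1 := pow_le_one₀ hq0.le hq1.le
  have h2 : 0 ≤ q ^ n := pow_nonneg hq0.le n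
  nlinarith

lemma neg_log_le (hq0 : 0 < q) (hq1 : q < 1) (hc0 : 0 ≤ c) (hc1 : c < 1) (n : ℕ) :
    -Real.log (1 - c * q ^ n) ≤ (1 - c)⁻¹ * (c * q ^ n) := by
  have hpos := term_pos hq0 hq1 hc0 hc1 n
  have h1 : q ^ n ≤ 1 := pow_le_one₀ hq0.le hq1.le
  have h2 : 0 ≤ q ^ n := pow_nonneg hq0.le n
  have hcq : c * q ^ n ≤ c := by nlinarith
  have hkey : Real.log (1 - c * q ^ n)⁻¹ ≤ (1 - c * q ^ n)⁻¹ - 1 :=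
    Real.log_le_sub_one_of_pos (by positivity)
  rw [Real.log_inv] at hkey
  have : (1 - c * q ^ n)⁻¹ - 1 = (c * q ^ n) / (1 - c * q ^ n) := by
    field_simp
    ring
  rw [this] at hkey
  refine hkey.trans ?_
  rw [div_eq_inv_mul]
  have hle : (1 - c * q ^ n)⁻¹ ≤ (1 - c)⁻¹ := by
    apply inv_anti₀ (by linarith)
    nlinarith
  exact mul_le_mul_of_nonneg_right hle (by positivity)

lemma summable_log (hq0 : 0 < q) (hq1 : q < 1) (hc0 : 0 ≤ c) (hc1 : c < 1) :
    Summable (fun n : ℕ => Real.log (1 - c * q ^ n)) := by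
  have hg : Summable (fun n : ℕ => (1 - c)⁻¹ * c * q ^ n) :=
    (summable_geometric_of_lt_one hq0.le hq1).mul_left _
  have hbnd : ∀ n : ℕ, |Real.log (1 - c * q ^ n)| ≤ (1 - c)⁻¹ * c * q ^ n := by
    intro n
    have hpos := term_pos hq0 hq1 hc0 hc1 n
    have hle1 : 1 - c * q ^ n ≤ 1 := by
      have h2 : 0 ≤ q ^ n := pow_nonneg hq0.le n
      nlinarith
    have hlog : Real.log (1 - c * q ^ n) ≤ 0 := Real.log_nonpos (by linarith) hle1
    rw [abs_of_nonpos hlog]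
    have := neg_log_le hq0 hq1 hc0 hc1 n
    linarith [this, mul_assoc (1-c)⁻¹ c (q ^ n)]
  exact Summable.of_abs (Summable.of_nonneg_of_le (fun n => abs_nonneg _) hbnd hg)

lemma qPochInf_eq_exp (hq0 : 0 < q) (hq1 : q < 1) (hc0 : 0 ≤ c) (hc1 : c < 1) :
    qPochInf c q = Real.exp (∑' n : ℕ, Real.log (1 - c * q ^ n)) := by
  have h := (summable_log hq0 hq1 hc0 hc1).hasSum.rexp
  have heq : (rexp ∘ fun n : ℕ => Real.log (1 - c * q ^ n)) = fun n : ℕ => 1 - c * q ^ n := by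
    funext n
    exact Real.exp_log (term_pos hq0 hq1 hc0 hc1 n)
  rw [heq] at h
  rw [qPochInf]
  exact h.tprod_eq

lemma qPochInf_pos (hq0 : 0 < q) (hq1 : q < 1) (hc0 : 0 ≤ c) (hc1 : c < 1) :
    0 < qPochInf c q := by
  rw [qPochInf_eq_exp hq0 hq1 hc0 hc1]; exact Real.exp_pos _

lemma qPochInf_shift (hq0 : 0 < q) (hq1 : q < 1) (hc0 : 0 ≤ c) (hc1 : c < 1) :
    qPochInf c q = (1 - c) * qPochInf (c * q) q := by
  have hcq0 : 0 ≤ c * q := mul_nonneg hc0 hq0.le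
  have hcq1 : c * q < 1 := by nlinarith
  rw [qPochInf_eq_exp hq0 hq1 hc0 hc1, qPochInf_eq_exp hq0 hq1 hcq0 hcq1]
  rw [Summable.tsum_eq_zero_add (summable_log hq0 hq1 hc0 hc1)]
  rw [Real.exp_add]
  congr 1
  · rw [pow_zero, mul_one, Real.exp_log (by linarith)]
  · congr 1
    apply tsum_congr
    intro n
    ring_nf
lemma abs_tsum_log_le (hq0 : 0 < q) (hq1 : q < 1) (hc0 : 0 ≤ c) (hc1 : c < 1) :
    |∑' n : ℕ, Real.log (1 - c * q ^ n)| ≤ (1 - c)⁻¹ * c * (1 - q)⁻¹ := by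
  have hsum := summable_log hq0 hq1 hc0 hc1
  have hg : Summable (fun n : ℕ => (1 - c)⁻¹ * c * q ^ n) :=
    (summable_geometric_of_lt_one hq0.le hq1).mul_left _
  have h1 : ∑' n : ℕ, Real.log (1 - c * q ^ n) ≤ 0 := by
    apply tsum_nonpos
    intro n
    have hpos := term_pos hq0 hq1 hc0 hc1 n
    have h2 : 0 ≤ q ^ n := pow_nonneg hq0.le n
    exact Real.log_nonpos (by linarith) (by nlinarith)
  have h3 : ∑' n : ℕ, -Real.log (1 - c * q ^ n) ≤ ∑' n : ℕ, (1 - c)⁻¹ * c * q ^ n := by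
    apply Summable.tsum_le_tsum _ hsum.neg hg
    intro n
    have := neg_log_le hq0 hq1 hc0 hc1 n
    linarith [mul_assoc (1 - c)⁻¹ c (q ^ n)]
  have h4 : ∑' n : ℕ, (1 - c)⁻¹ * c * q ^ n = (1 - c)⁻¹ * c * (1 - q)⁻¹ := by
    rw [tsum_mul_left, tsum_geometric_of_lt_one hq0.le hq1]
  rw [tsum_neg] at h3
  rw [abs_of_nonpos h1]
  linarith

lemma tendsto_qPochInf (hq0 : 0 < q) (hq1 : q < 1) :
    Tendsto (fun y : ℝ => qPochInf (q ^ y) q) atTop (nhds 1) := by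
  have hq0' : -1 < q := by linarith
  have hrp : Tendsto (fun y : ℝ => q ^ y) atTop (nhds 0) :=
    tendsto_rpow_atTop_of_base_lt_one q hq0' hq1
  have hLlim : Tendsto (fun y : ℝ => ∑' n : ℕ, Real.log (1 - q ^ y * q ^ n)) atTop (nhds 0) := by
    have hb : ∀ᶠ y : ℝ in atTop, ‖∑' n : ℕ, Real.log (1 - q ^ y * q ^ n)‖ ≤
        (1 - q ^ y)⁻¹ * q ^ y * (1 - q)⁻¹ := by
      filter_upwards [eventually_gt_atTop 0] with y hy
      exact abs_tsum_log_le hq0 hq1 (Real.rpow_pos_of_pos hq0 y).le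
        (Real.rpow_lt_one hq0.le hq1 hy)
    have hgt : Tendsto (fun y : ℝ => (1 - q ^ y)⁻¹ * q ^ y * (1 - q)⁻¹) atTop (nhds 0) := by
      have : Tendsto (fun y : ℝ => (1 - q ^ y)⁻¹ * q ^ y * (1 - q)⁻¹) atTop
          (nhds ((1 - 0)⁻¹ * 0 * (1 - q)⁻¹)) :=
        (((tendsto_const_nhds.sub hrp).inv₀ (by norm_num)).mul hrp).mul tendsto_const_nhds
      simpa using this
    exact squeeze_zero_norm' hb hgt
  have hexp : Tendsto (fun y : ℝ => Real.exp (∑' n : ℕ, Real.log (1 - q ^ y * q ^ n)))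
      atTop (nhds 1) := by
    have := (Real.continuous_exp.tendsto 0).comp hLlim
    simpa [Function.comp_def] using this
  apply hexp.congr'
  filter_upwards [eventually_gt_atTop 0] with y hy
  exact (qPochInf_eq_exp hq0 hq1 (Real.rpow_pos_of_pos hq0 y).le
    (Real.rpow_lt_one hq0.le hq1 hy)).symm

lemma qPochInf_rpow_pos (hq0 : 0 < q) (hq1 : q < 1) {x : ℝ} (hx : 0 < x) :
    0 < qPochInf (q ^ x) q :=
  qPochInf_pos hq0 hq1 (Real.rpow_pos_of_pos hq0 x).le (Real.rpow_lt_one hq0.le hq1 hx)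

lemma qGamma_pos (hq0 : 0 < q) (hq1 : q < 1) {x : ℝ} (hx : 0 < x) : 0 < qGamma q x := by
  unfold qGamma
  have h1 : 0 < qPochInf q q := qPochInf_pos hq0 hq1 hq0.le hq1
  have h2 : 0 < qPochInf (q ^ x) q := qPochInf_rpow_pos hq0 hq1 hx
  have h3 : (0:ℝ) < 1 - q := by linarith
  exact mul_pos (div_pos h1 h2) (Real.rpow_pos_of_pos h3 _)

lemma qBracket_pos (hq0 : 0 < q) (hq1 : q < 1) {x : ℝ} (hx : 0 < x) : 0 < qBracket q x := by
  unfold qBracket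
  have h2 : q ^ x < 1 := Real.rpow_lt_one hq0.le hq1 hx
  have h3 : (0:ℝ) < 1 - q := by linarith
  exact div_pos (by linarith) h3

lemma qGamma_rec (hq0 : 0 < q) (hq1 : q < 1) {x : ℝ} (hx : 0 < x) :
    qGamma q (x + 1) = qBracket q x * qGamma q x := by
  have hE : (0:ℝ) < 1 - q := by linarith
  have hqx0 : 0 < q ^ x := Real.rpow_pos_of_pos hq0 x
  have hqx1 : q ^ x < 1 := Real.rpow_lt_one hq0.le hq1 hx
  have hshift : qPochInf (q ^ x) q = (1 - q ^ x) * qPochInf (q ^ (x+1)) q := by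
    rw [qPochInf_shift hq0 hq1 hqx0.le hqx1, Real.rpow_add hq0, Real.rpow_one]
  have h2 : 0 < qPochInf (q ^ (x+1)) q := qPochInf_rpow_pos hq0 hq1 (by linarith)
  have h3 : 0 < qPochInf (q ^ x) q := qPochInf_rpow_pos hq0 hq1 hx
  have hE1 : (1 - q) ^ (1 - x) = (1 - q) * (1 - q) ^ (1 - (x+1)) := by
    rw [show (1:ℝ) - x = 1 + (1 - (x+1)) by ring, Real.rpow_add hE, Real.rpow_one]
  have h1 : 0 < qPochInf q q := qPochInf_pos hq0 hq1 hq0.le hq1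
  unfold qGamma qBracket
  rw [hE1, hshift]
  generalize hBv : qPochInf (q ^ (x+1)) q = B at h2
  generalize hPv : qPochInf q q = P at h1
  generalize hCv : (1 - q) ^ (1 - (x+1)) = C
  have hC : (0:ℝ) < C := hCv ▸ Real.rpow_pos_of_pos hE _
  have h4 : (1:ℝ) - q ^ x ≠ 0 := by linarith
  have h5 : (1:ℝ) - q ≠ 0 := ne_of_gt hE
  have hB0 : B ≠ 0 := ne_of_gt h2
  have hC0 : C ≠ 0 := ne_of_gt hC
  have hP0 : P ≠ 0 := ne_of_gt h1
  rw [mul_comm (1 - q ^ x) B, ← div_div]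
  field_simp

lemma qGamma_ratio (hq0 : 0 < q) (hq1 : q < 1) {y z : ℝ} (hy : 0 < y) (hz : 0 < z) :
    qGamma q y / qGamma q z
      = qPochInf (q ^ z) q / qPochInf (q ^ y) q * (1 - q) ^ (z - y) := by
  have hE : (0:ℝ) < 1 - q := by linarith
  have h1 : 0 < qPochInf q q := qPochInf_pos hq0 hq1 hq0.le hq1
  have h2 : 0 < qPochInf (q ^ y) q := qPochInf_rpow_pos hq0 hq1 hy
  have h3 : 0 < qPochInf (q ^ z) q := qPochInf_rpow_pos hq0 hq1 hz
  have hsub : (1 - q) ^ (z - y) = (1 - q) ^ (1 - y) / (1 - q) ^ (1 - z) := by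
    rw [← Real.rpow_sub hE]; ring_nf
  unfold qGamma
  rw [hsub]
  generalize hPv : qPochInf q q = P at h1
  generalize hAv : qPochInf (q ^ y) q = A at h2
  generalize hBv : qPochInf (q ^ z) q = B at h3
  generalize hCv : (1 - q) ^ (1 - y) = C
  generalize hDv : (1 - q) ^ (1 - z) = D
  have hC : (0:ℝ) < C := hCv ▸ Real.rpow_pos_of_pos hE _
  have hD : (0:ℝ) < D := hDv ▸ Real.rpow_pos_of_pos hE _
  field_simp
lemma prod_gamma_ratio (hq0 : 0 < q) (hq1 : q < 1) {m : ℕ} (cs : Fin m → ℝ)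
    (hcs : ∀ i, 0 ≤ cs i) {u v : ℝ} (hu : 0 < u) (hv : 0 < v) :
    (∏ i, qGamma q (u + cs i) / qGamma q (1 + cs i)) /
      (∏ i, qGamma q (v + cs i) / qGamma q (1 + cs i))
    = (∏ i, qPochInf (q ^ (v + cs i)) q / qPochInf (q ^ (u + cs i)) q) *
        (1 - q) ^ ((v - u) * (m : ℝ)) := by
  have hE : (0:ℝ) < 1 - q := by linarith
  rw [← Finset.prod_div_distrib]
  have hfac : ∀ i ∈ Finset.univ,
      (qGamma q (u + cs i) / qGamma q (1 + cs i)) / (qGamma q (v + cs i) / qGamma q (1 + cs i))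
      = (qPochInf (q ^ (v + cs i)) q / qPochInf (q ^ (u + cs i)) q) * (1 - q) ^ (v - u) := by
    intro i _
    have hu' : 0 < u + cs i := add_pos_of_pos_of_nonneg hu (hcs i)
    have hv' : 0 < v + cs i := add_pos_of_pos_of_nonneg hv (hcs i)
    have h1 : qGamma q (1 + cs i) ≠ 0 :=
      ne_of_gt (qGamma_pos hq0 hq1 (by linarith [hcs i]))
    have h2 : qGamma q (v + cs i) ≠ 0 := ne_of_gt (qGamma_pos hq0 hq1 hv')
    have hstep : (qGamma q (u + cs i) / qGamma q (1 + cs i)) /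
        (qGamma q (v + cs i) / qGamma q (1 + cs i))
        = qGamma q (u + cs i) / qGamma q (v + cs i) := by
      field_simp
    rw [hstep, qGamma_ratio hq0 hq1 hu' hv']
    congr 2
    ring
  rw [Finset.prod_congr rfl hfac, Finset.prod_mul_distrib, Finset.prod_const,
    Finset.card_univ, Fintype.card_fin]
  congr 1
  rw [← Real.rpow_natCast ((1 - q) ^ (v - u)) m, ← Real.rpow_mul hE.le]

lemma psi_ratio (hq0 : 0 < q) (hq1 : q < 1) (k : ℝ) {r s : ℕ} (a : Fin r → ℝ) (b : Fin s → ℝ)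
    (ha : ∀ i, 0 ≤ a i) (hb : ∀ j, 0 ≤ b j) {u v : ℝ} (hu : 0 < u) (hv : 0 < v) :
    ((1 - q) ^ (k * ((r : ℝ) - (s : ℝ)) * u) *
      ((∏ i, qGamma q (u + a i) / qGamma q (1 + a i)) *
       ∏ j, qGamma q (1 + b j) / qGamma q (u + b j)) ^ k) /
    ((1 - q) ^ (k * ((r : ℝ) - (s : ℝ)) * v) *
      ((∏ i, qGamma q (v + a i) / qGamma q (1 + a i)) *
       ∏ j, qGamma q (1 + b j) / qGamma q (v + b j)) ^ k)
    = ((∏ i, qPochInf (q ^ (v + a i)) q / qPochInf (q ^ (u + a i)) q) *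
       ∏ j, qPochInf (q ^ (u + b j)) q / qPochInf (q ^ (v + b j)) q) ^ k := by
  have hE : (0:ℝ) < 1 - q := by linarith
  have hgamma_pos : ∀ t : ℝ, 0 < t → 0 < qGamma q t := fun t ht => qGamma_pos hq0 hq1 ht
  have hQp_pos : ∀ t : ℝ, 0 < t → 0 < qPochInf (q ^ t) q :=
    fun t ht => qPochInf_rpow_pos hq0 hq1 ht
  have hApos : ∀ w : ℝ, 0 < w → 0 < ∏ i, qGamma q (w + a i) / qGamma q (1 + a i) := by
    intro w hw
    apply Finset.prod_pos
    intro i _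
    exact div_pos (hgamma_pos _ (add_pos_of_pos_of_nonneg hw (ha i)))
      (hgamma_pos _ (by linarith [ha i]))
  have hBpos : ∀ w : ℝ, 0 < w → 0 < ∏ j, qGamma q (1 + b j) / qGamma q (w + b j) := by
    intro w hw
    apply Finset.prod_pos
    intro j _
    exact div_pos (hgamma_pos _ (by linarith [hb j]))
      (hgamma_pos _ (add_pos_of_pos_of_nonneg hw (hb j)))
  have hDa_pos : 0 < ∏ i, qPochInf (q ^ (v + a i)) q / qPochInf (q ^ (u + a i)) q :=
    Finset.prod_pos fun i _ => div_pos (hQp_pos _ (add_pos_of_pos_of_nonneg hv (ha i)))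
      (hQp_pos _ (add_pos_of_pos_of_nonneg hu (ha i)))
  have hDb_pos : 0 < ∏ j, qPochInf (q ^ (u + b j)) q / qPochInf (q ^ (v + b j)) q :=
    Finset.prod_pos fun j _ => div_pos (hQp_pos _ (add_pos_of_pos_of_nonneg hu (hb j)))
      (hQp_pos _ (add_pos_of_pos_of_nonneg hv (hb j)))
  -- b-side as inverse of a-side style product
  have hBinv : ∀ w : ℝ, (∏ j, qGamma q (1 + b j) / qGamma q (w + b j))
      = (∏ j, qGamma q (w + b j) / qGamma q (1 + b j))⁻¹ := by
    intro w
    rw [← Finset.prod_inv_distrib]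
    exact Finset.prod_congr rfl fun j _ => (inv_div _ _).symm
  have hIu : 0 < (∏ i, qGamma q (u + a i) / qGamma q (1 + a i)) *
      ∏ j, qGamma q (1 + b j) / qGamma q (u + b j) := mul_pos (hApos u hu) (hBpos u hu)
  have hIv : 0 < (∏ i, qGamma q (v + a i) / qGamma q (1 + a i)) *
      ∏ j, qGamma q (1 + b j) / qGamma q (v + b j) := mul_pos (hApos v hv) (hBpos v hv)
  -- Step 1 : rewrite LHS as E^(α-β) * (Iu/Iv)^k
  rw [show ((1 - q) ^ (k * ((r : ℝ) - (s : ℝ)) * u) *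
      ((∏ i, qGamma q (u + a i) / qGamma q (1 + a i)) *
       ∏ j, qGamma q (1 + b j) / qGamma q (u + b j)) ^ k) /
    ((1 - q) ^ (k * ((r : ℝ) - (s : ℝ)) * v) *
      ((∏ i, qGamma q (v + a i) / qGamma q (1 + a i)) *
       ∏ j, qGamma q (1 + b j) / qGamma q (v + b j)) ^ k)
    = (1 - q) ^ (k * ((r : ℝ) - (s : ℝ)) * u - k * ((r : ℝ) - (s : ℝ)) * v) *
      (((∏ i, qGamma q (u + a i) / qGamma q (1 + a i)) *
       ∏ j, qGamma q (1 + b j) / qGamma q (u + b j)) /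
       ((∏ i, qGamma q (v + a i) / qGamma q (1 + a i)) *
       ∏ j, qGamma q (1 + b j) / qGamma q (v + b j))) ^ k from by
    rw [Real.rpow_sub hE, Real.div_rpow hIu.le hIv.le, div_mul_div_comm]]
  -- Step 2 : compute Iu / Iv
  have hIratio : ((∏ i, qGamma q (u + a i) / qGamma q (1 + a i)) *
       ∏ j, qGamma q (1 + b j) / qGamma q (u + b j)) /
       ((∏ i, qGamma q (v + a i) / qGamma q (1 + a i)) *
       ∏ j, qGamma q (1 + b j) / qGamma q (v + b j))
      = ((∏ i, qPochInf (q ^ (v + a i)) q / qPochInf (q ^ (u + a i)) q) *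
       ∏ j, qPochInf (q ^ (u + b j)) q / qPochInf (q ^ (v + b j)) q) *
        (1 - q) ^ ((v - u) * ((r : ℝ) - (s : ℝ))) := by
    rw [← div_mul_div_comm]
    rw [prod_gamma_ratio hq0 hq1 a ha hu hv]
    rw [hBinv u, hBinv v, inv_div_inv,
      prod_gamma_ratio hq0 hq1 b hb hv hu]
    rw [show (v - u) * ((r : ℝ) - (s : ℝ))
        = (v - u) * (r : ℝ) + (u - v) * (s : ℝ) by ring, Real.rpow_add hE]
    ring
  rw [hIratio]
  -- Step 3 : combine the powers of (1 - q)
  rw [Real.mul_rpow (mul_pos hDa_pos hDb_pos).le (Real.rpow_pos_of_pos hE _).le,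
    ← Real.rpow_mul hE.le, ← mul_assoc, mul_comm ((1 - q) ^ _), mul_assoc,
    ← Real.rpow_add hE, show k * ((r : ℝ) - (s : ℝ)) * u - k * ((r : ℝ) - (s : ℝ)) * v +
      (v - u) * ((r : ℝ) - (s : ℝ)) * k = 0 by ring, Real.rpow_zero, mul_one]
noncomputable def myG (q k : ℝ) {r s : ℕ} (a : Fin r → ℝ) (b : Fin s → ℝ) (x : ℝ) : ℝ :=
  ((∏ i, qGamma q (x + a i) / qGamma q (1 + a i)) *
    ∏ j, qGamma q (1 + b j) / qGamma q (x + b j)) ^ k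

variable {k : ℝ} {r s : ℕ}

lemma myG_pos (hq0 : 0 < q) (hq1 : q < 1) (k : ℝ) (a : Fin r → ℝ) (b : Fin s → ℝ)
    (ha : ∀ i, 0 ≤ a i) (hb : ∀ j, 0 ≤ b j) {x : ℝ} (hx : 0 < x) :
    0 < myG q k a b x := by
  apply Real.rpow_pos_of_pos
  apply mul_pos
  · exact Finset.prod_pos fun i _ => div_pos
      (qGamma_pos hq0 hq1 (by linarith [ha i])) (qGamma_pos hq0 hq1 (by linarith [ha i]))
  · exact Finset.prod_pos fun j _ => div_pos
      (qGamma_pos hq0 hq1 (by linarith [hb j])) (qGamma_pos hq0 hq1 (by linarith [hb j]))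

lemma myG_one (hq0 : 0 < q) (hq1 : q < 1) (k : ℝ) (a : Fin r → ℝ) (b : Fin s → ℝ)
    (ha : ∀ i, 0 ≤ a i) (hb : ∀ j, 0 ≤ b j) : myG q k a b 1 = 1 := by
  unfold myG
  have h1 : (∏ i, qGamma q ((1:ℝ) + a i) / qGamma q (1 + a i)) = 1 :=
    Finset.prod_eq_one fun i _ => div_self (ne_of_gt (qGamma_pos hq0 hq1 (by linarith [ha i])))
  have h2 : (∏ j, qGamma q ((1:ℝ) + b j) / qGamma q (1 + b j)) = 1 :=
    Finset.prod_eq_one fun j _ => div_self (ne_of_gt (qGamma_pos hq0 hq1 (by linarith [hb j])))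
  rw [h1, h2, one_mul, Real.one_rpow]

lemma myG_rec (hq0 : 0 < q) (hq1 : q < 1) (k : ℝ) (a : Fin r → ℝ) (b : Fin s → ℝ)
    (ha : ∀ i, 0 ≤ a i) (hb : ∀ j, 0 ≤ b j) {x : ℝ} (hx : 0 < x) :
    myG q k a b (x + 1) =
      ((∏ i, qBracket q (x + a i)) / ∏ j, qBracket q (x + b j)) ^ k * myG q k a b x := by
  unfold myG
  have hPa : 0 < ∏ i, qBracket q (x + a i) :=
    Finset.prod_pos fun i _ => qBracket_pos hq0 hq1 (by linarith [ha i])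
  have hPb : 0 < ∏ j, qBracket q (x + b j) :=
    Finset.prod_pos fun j _ => qBracket_pos hq0 hq1 (by linarith [hb j])
  have hA : (∏ i, qGamma q (x + 1 + a i) / qGamma q (1 + a i))
      = (∏ i, qBracket q (x + a i)) * (∏ i, qGamma q (x + a i) / qGamma q (1 + a i)) := by
    rw [← Finset.prod_mul_distrib]
    apply Finset.prod_congr rfl
    intro i _
    rw [show x + 1 + a i = (x + a i) + 1 by ring,
      qGamma_rec hq0 hq1 (by linarith [ha i] : (0:ℝ) < x + a i), mul_div_assoc]
  have hB : (∏ j, qGamma q (1 + b j) / qGamma q (x + 1 + b j))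
      = (∏ j, qBracket q (x + b j))⁻¹ * (∏ j, qGamma q (1 + b j) / qGamma q (x + b j)) := by
    rw [← Finset.prod_inv_distrib, ← Finset.prod_mul_distrib]
    apply Finset.prod_congr rfl
    intro j _
    rw [show x + 1 + b j = (x + b j) + 1 by ring,
      qGamma_rec hq0 hq1 (by linarith [hb j] : (0:ℝ) < x + b j)]
    have hBq : qBracket q (x + b j) ≠ 0 := ne_of_gt (qBracket_pos hq0 hq1 (by linarith [hb j]))
    have hG2 : qGamma q (x + b j) ≠ 0 := ne_of_gt (qGamma_pos hq0 hq1 (by linarith [hb j]))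
    field_simp
  rw [hA, hB]
  have hIx : 0 < (∏ i, qGamma q (x + a i) / qGamma q (1 + a i)) *
      ∏ j, qGamma q (1 + b j) / qGamma q (x + b j) := by
    apply mul_pos
    · exact Finset.prod_pos fun i _ => div_pos
        (qGamma_pos hq0 hq1 (by linarith [ha i])) (qGamma_pos hq0 hq1 (by linarith [ha i]))
    · exact Finset.prod_pos fun j _ => div_pos
        (qGamma_pos hq0 hq1 (by linarith [hb j])) (qGamma_pos hq0 hq1 (by linarith [hb j]))
  rw [show ((∏ i, qBracket q (x + a i)) * (∏ i, qGamma q (x + a i) / qGamma q (1 + a i))) *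
      ((∏ j, qBracket q (x + b j))⁻¹ * (∏ j, qGamma q (1 + b j) / qGamma q (x + b j)))
      = ((∏ i, qBracket q (x + a i)) / ∏ j, qBracket q (x + b j)) *
        ((∏ i, qGamma q (x + a i) / qGamma q (1 + a i)) *
          ∏ j, qGamma q (1 + b j) / qGamma q (x + b j)) by
    rw [div_eq_mul_inv]; ring]
  rw [Real.mul_rpow (div_pos hPa hPb).le hIx.le]

noncomputable def myPsi (q k : ℝ) {r s : ℕ} (a : Fin r → ℝ) (b : Fin s → ℝ) (y : ℝ) : ℝ :=
  (1 - q) ^ (k * ((r : ℝ) - (s : ℝ)) * y) * myG q k a b y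

lemma myPsi_pos (hq0 : 0 < q) (hq1 : q < 1) (k : ℝ) (a : Fin r → ℝ) (b : Fin s → ℝ)
    (ha : ∀ i, 0 ≤ a i) (hb : ∀ j, 0 ≤ b j) {x : ℝ} (hx : 0 < x) :
    0 < myPsi q k a b x :=
  mul_pos (Real.rpow_pos_of_pos (by linarith) _) (myG_pos hq0 hq1 k a b ha hb hx)

lemma myPsi_ratio (hq0 : 0 < q) (hq1 : q < 1) (k : ℝ) (a : Fin r → ℝ) (b : Fin s → ℝ)
    (ha : ∀ i, 0 ≤ a i) (hb : ∀ j, 0 ≤ b j) {u v : ℝ} (hu : 0 < u) (hv : 0 < v) :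
    myPsi q k a b u / myPsi q k a b v
    = ((∏ i, qPochInf (q ^ (v + a i)) q / qPochInf (q ^ (u + a i)) q) *
       ∏ j, qPochInf (q ^ (u + b j)) q / qPochInf (q ^ (v + b j)) q) ^ k :=
  psi_ratio hq0 hq1 k a b ha hb hu hv

lemma tendsto_Dk (hq0 : 0 < q) (hq1 : q < 1) (k : ℝ) (a : Fin r → ℝ) (b : Fin s → ℝ)
    {u v : ℕ → ℝ} (hu : Tendsto u atTop atTop) (hv : Tendsto v atTop atTop) :
    Tendsto (fun n : ℕ =>
      ((∏ i, qPochInf (q ^ (v n + a i)) q / qPochInf (q ^ (u n + a i)) q) *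
       ∏ j, qPochInf (q ^ (u n + b j)) q / qPochInf (q ^ (v n + b j)) q) ^ k)
      atTop (nhds 1) := by
  have hQ : ∀ (w : ℕ → ℝ), Tendsto w atTop atTop → ∀ c : ℝ,
      Tendsto (fun n : ℕ => qPochInf (q ^ (w n + c)) q) atTop (nhds 1) := by
    intro w hw c
    exact (tendsto_qPochInf hq0 hq1).comp (tendsto_atTop_add_const_right atTop c hw)
  have h1 : Tendsto (fun n : ℕ =>
      ∏ i, qPochInf (q ^ (v n + a i)) q / qPochInf (q ^ (u n + a i)) q) atTop
      (nhds (∏ _i : Fin r, (1:ℝ))) := by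
    apply tendsto_finset_prod
    intro i _
    have := (hQ v hv (a i)).div (hQ u hu (a i)) one_ne_zero
    simpa [Pi.div_def] using this
  have h2 : Tendsto (fun n : ℕ =>
      ∏ j, qPochInf (q ^ (u n + b j)) q / qPochInf (q ^ (v n + b j)) q) atTop
      (nhds (∏ _j : Fin s, (1:ℝ))) := by
    apply tendsto_finset_prod
    intro j _
    have := (hQ u hu (b j)).div (hQ v hv (b j)) one_ne_zero
    simpa [Pi.div_def] using this
  simp only [Finset.prod_const_one] at h1 h2
  have h3 := h1.mul h2
  rw [mul_one] at h3
  have h4 := h3.rpow_const (p := k) (Or.inl one_ne_zero)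
  simpa using h4
end aux

theorem stmt6 (q : ℝ) (hq0 : 0 < q) (hq1 : q < 1) (k : ℝ) (r s : ℕ)
    (a : Fin r → ℝ) (b : Fin s → ℝ) (ha : ∀ i, 0 ≤ a i) (hb : ∀ j, 0 ≤ b j)
    (f : ℝ → ℝ) (hpos : ∀ x > 0, 0 < f x)
    (hfe : ∀ x > 0, f (x + 1) =
      ((∏ i, qBracket q (x + a i)) / ∏ j, qBracket q (x + b j)) ^ k * f x)
    (M : ℝ) (hM : 0 < M)
    (hmono : MonotoneOn (fun x => (1 - q) ^ (k * ((r : ℝ) - (s : ℝ)) * x) * f x) (Ioi M) ∨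
             AntitoneOn (fun x => (1 - q) ^ (k * ((r : ℝ) - (s : ℝ)) * x) * f x) (Ioi M))
    (hf1 : f 1 = 1) :
    ∀ x > 0, f x =
      ((∏ i, qGamma q (x + a i) / qGamma q (1 + a i)) *
       ∏ j, qGamma q (1 + b j) / qGamma q (x + b j)) ^ k := by
  have hE : (0:ℝ) < 1 - q := by linarith
  suffices key : ∀ x > 0, f x = myG q k a b x by
    intro x hx
    exact key x hx
  have hGpos : ∀ x : ℝ, 0 < x → 0 < myG q k a b x :=
    fun x hx => myG_pos hq0 hq1 k a b ha hb hx
  have hGne : ∀ x : ℝ, 0 < x → myG q k a b x ≠ 0 := fun x hx => ne_of_gt (hGpos x hx)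
  -- value at positive integers
  have hint : ∀ n : ℕ, f ((n:ℝ) + 1) = myG q k a b ((n:ℝ) + 1) := by
    intro n
    induction n with
    | zero => simpa using hf1.trans (myG_one hq0 hq1 k a b ha hb).symm
    | succ n ih =>
      have hp : (0:ℝ) < (n:ℝ) + 1 := by positivity
      push_cast
      rw [show (n:ℝ) + 1 + 1 = ((n:ℝ) + 1) + 1 by ring,
        hfe _ hp, myG_rec hq0 hq1 k a b ha hb hp, ih]
  have hint' : ∀ n : ℕ, 1 ≤ n → f (n:ℝ) = myG q k a b (n:ℝ) := by
    intro n hn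
    obtain ⟨m, rfl⟩ := Nat.exists_eq_add_of_le hn
    rw [show ((1 + m : ℕ) : ℝ) = (m:ℝ) + 1 by push_cast; ring]
    exact hint m
  -- cross identity from the functional equation
  have hcross : ∀ x : ℝ, 0 < x → ∀ n : ℕ,
      f (x + n) * myG q k a b x = f x * myG q k a b (x + n) := by
    intro x hx n
    induction n with
    | zero => simp
    | succ n ih =>
      have hp : (0:ℝ) < x + n := by positivity
      push_cast
      calc f (x + ((n:ℝ) + 1)) * myG q k a b x
          = f ((x + (n:ℝ)) + 1) * myG q k a b x := by ring_nf
        _ = ((∏ i, qBracket q ((x + (n:ℝ)) + a i)) /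
              ∏ j, qBracket q ((x + (n:ℝ)) + b j)) ^ k * (f (x + (n:ℝ)) * myG q k a b x) := by
            rw [hfe _ hp]; ring
        _ = ((∏ i, qBracket q ((x + (n:ℝ)) + a i)) /
              ∏ j, qBracket q ((x + (n:ℝ)) + b j)) ^ k * (f x * myG q k a b (x + (n:ℝ))) := by
            rw [ih]
        _ = f x * (((∏ i, qBracket q ((x + (n:ℝ)) + a i)) /
              ∏ j, qBracket q ((x + (n:ℝ)) + b j)) ^ k * myG q k a b (x + (n:ℝ))) := by ring
        _ = f x * myG q k a b (x + ((n:ℝ) + 1)) := by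
            rw [← myG_rec hq0 hq1 k a b ha hb hp]; ring_nf
  -- the key step on (0, 1]
  have key1 : ∀ x : ℝ, 0 < x → x ≤ 1 → f x = myG q k a b x := by
    intro x hx hx1
    set F := fun x : ℝ => (1 - q) ^ (k * ((r : ℝ) - (s : ℝ)) * x) * f x with hF
    have hFdiv : ∀ y : ℝ, 0 < y → F y / myPsi q k a b y = f y / myG q k a b y := by
      intro y hy
      rw [hF, myPsi]
      exact mul_div_mul_left _ _ (ne_of_gt (Real.rpow_pos_of_pos hE _))
    have hFpsi : ∀ y : ℝ, 0 < y → f y = myG q k a b y → F y = myPsi q k a b y := by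
      intro y hy hfy
      show (1 - q) ^ (k * ((r:ℝ) - (s:ℝ)) * y) * f y = myPsi q k a b y
      rw [myPsi, hfy]
    -- limits
    have hu0 : Tendsto (fun n : ℕ => (n:ℝ)) atTop atTop := tendsto_natCast_atTop_atTop
    have hu1 : Tendsto (fun n : ℕ => (n:ℝ) + 1) atTop atTop :=
      tendsto_atTop_add_const_right _ 1 hu0
    have hvx : Tendsto (fun n : ℕ => (n:ℝ) + x) atTop atTop :=
      tendsto_atTop_add_const_right _ x hu0
    have T1 : Tendsto (fun n : ℕ => myPsi q k a b (n:ℝ) / myPsi q k a b ((n:ℝ) + x))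
        atTop (nhds 1) := by
      apply (tendsto_Dk hq0 hq1 k a b hu0 hvx).congr'
      filter_upwards [eventually_ge_atTop 1] with n hn
      have hn' : (0:ℝ) < (n:ℝ) := by exact_mod_cast hn
      exact (myPsi_ratio hq0 hq1 k a b ha hb hn' (by linarith)).symm
    have T2 : Tendsto (fun n : ℕ => myPsi q k a b ((n:ℝ) + 1) / myPsi q k a b ((n:ℝ) + x))
        atTop (nhds 1) := by
      apply (tendsto_Dk hq0 hq1 k a b hu1 hvx).congr'
      filter_upwards [eventually_ge_atTop 1] with n hn
      have hn' : (0:ℝ) < (n:ℝ) := by exact_mod_cast hn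
      exact (myPsi_ratio hq0 hq1 k a b ha hb (by linarith) (by linarith)).symm
    -- the threshold
    set N₀ : ℕ := ⌈M⌉₊ + 1 with hN₀
    have hNM : ∀ n : ℕ, N₀ ≤ n → M < (n:ℝ) := by
      intro n hn
      have h1 : M ≤ (⌈M⌉₊ : ℝ) := Nat.le_ceil M
      have h2 : ((⌈M⌉₊ + 1 : ℕ) : ℝ) ≤ (n:ℝ) := by exact_mod_cast hn
      push_cast at h2
      linarith
    have hN1 : 1 ≤ N₀ := by omega
    -- the ratio at n + x equals the one at x
    have hDn : ∀ n : ℕ, 0 < (n:ℝ) →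
        F ((n:ℝ) + x) / myPsi q k a b ((n:ℝ) + x) = f x / myG q k a b x := by
      intro n hn
      rw [hFdiv _ (by linarith)]
      rw [div_eq_div_iff (hGne _ (by linarith)) (hGne _ hx)]
      have := hcross x hx n
      rw [show x + (n:ℝ) = (n:ℝ) + x by ring] at this
      linarith [this]
    -- bounds for the two cases
    have hFn : ∀ n : ℕ, 1 ≤ n → F (n:ℝ) = myPsi q k a b (n:ℝ) := by
      intro n hn
      exact hFpsi _ (by exact_mod_cast hn) (hint' n hn)
    have hFn1 : ∀ n : ℕ, F ((n:ℝ) + 1) = myPsi q k a b ((n:ℝ) + 1) := by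
      intro n
      exact hFpsi _ (by positivity) (hint n)
    have hPsixpos : ∀ n : ℕ, 0 < (n:ℝ) → 0 < myPsi q k a b ((n:ℝ) + x) :=
      fun n hn => myPsi_pos hq0 hq1 k a b ha hb (by linarith)
    have hD1 : f x / myG q k a b x = 1 := by
      rcases hmono with hm | hm
      · have low : ∀ n : ℕ, N₀ ≤ n →
            myPsi q k a b (n:ℝ) / myPsi q k a b ((n:ℝ) + x) ≤ f x / myG q k a b x := by
          intro n hn
          have hnM := hNM n hn
          have hn0 : (0:ℝ) < (n:ℝ) := by linarith
          have h1 : F (n:ℝ) ≤ F ((n:ℝ) + x) := by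
            apply hm (mem_Ioi.2 hnM) (mem_Ioi.2 (by linarith)) (by linarith)
          rw [← hDn n hn0, ← hFn n (le_trans hN1 hn)]
          gcongr
          exact (hPsixpos n hn0).le
        have up : ∀ n : ℕ, N₀ ≤ n →
            f x / myG q k a b x ≤ myPsi q k a b ((n:ℝ) + 1) / myPsi q k a b ((n:ℝ) + x) := by
          intro n hn
          have hnM := hNM n hn
          have hn0 : (0:ℝ) < (n:ℝ) := by linarith
          have h1 : F ((n:ℝ) + x) ≤ F ((n:ℝ) + 1) := by
            apply hm (mem_Ioi.2 (by linarith)) (mem_Ioi.2 (by linarith)) (by linarith)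
          rw [← hDn n hn0, ← hFn1 n]
          gcongr
          exact (hPsixpos n hn0).le
        have hge : 1 ≤ f x / myG q k a b x :=
          le_of_tendsto T1 (eventually_atTop.2 ⟨N₀, low⟩)
        have hle : f x / myG q k a b x ≤ 1 :=
          ge_of_tendsto T2 (eventually_atTop.2 ⟨N₀, up⟩)
        linarith
      · have low : ∀ n : ℕ, N₀ ≤ n →
            myPsi q k a b ((n:ℝ) + 1) / myPsi q k a b ((n:ℝ) + x) ≤ f x / myG q k a b x := by
          intro n hn
          have hnM := hNM n hn
          have hn0 : (0:ℝ) < (n:ℝ) := by linarith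
          have h1 : F ((n:ℝ) + 1) ≤ F ((n:ℝ) + x) := by
            apply hm (mem_Ioi.2 (by linarith)) (mem_Ioi.2 (by linarith)) (by linarith)
          rw [← hDn n hn0, ← hFn1 n]
          gcongr
          exact (hPsixpos n hn0).le
        have up : ∀ n : ℕ, N₀ ≤ n →
            f x / myG q k a b x ≤ myPsi q k a b (n:ℝ) / myPsi q k a b ((n:ℝ) + x) := by
          intro n hn
          have hnM := hNM n hn
          have hn0 : (0:ℝ) < (n:ℝ) := by linarith
          have h1 : F ((n:ℝ) + x) ≤ F (n:ℝ) := by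
            apply hm (mem_Ioi.2 hnM) (mem_Ioi.2 (by linarith)) (by linarith)
          rw [← hDn n hn0, ← hFn n (le_trans hN1 hn)]
          gcongr
          exact (hPsixpos n hn0).le
        have hge : 1 ≤ f x / myG q k a b x :=
          le_of_tendsto T2 (eventually_atTop.2 ⟨N₀, low⟩)
        have hle : f x / myG q k a b x ≤ 1 :=
          ge_of_tendsto T1 (eventually_atTop.2 ⟨N₀, up⟩)
        linarith
    rw [div_eq_one_iff_eq (hGne x hx)] at hD1
    exact hD1
  -- extension to all positive reals
  have keyn : ∀ n : ℕ, ∀ x : ℝ, 0 < x → x ≤ (n:ℝ) + 1 → f x = myG q k a b x := by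
    intro n
    induction n with
    | zero => intro x hx hx1; exact key1 x hx (by simpa using hx1)
    | succ n ih =>
      intro x hx hx1
      by_cases hc : x ≤ (n:ℝ) + 1
      · exact ih x hx hc
      · push_neg at hc
        have h0n : (0:ℝ) ≤ (n:ℝ) := Nat.cast_nonneg n
        have hn1 : (1:ℝ) ≤ (n:ℝ) + 1 := by linarith
        have hx1' : 0 < x - 1 := by linarith
        have h1 := hfe (x - 1) hx1'
        have h2 := myG_rec hq0 hq1 k a b ha hb hx1'
        rw [sub_add_cancel] at h1 h2
        rw [h1, h2, ih (x - 1) hx1' (by push_cast at hx1 ⊢; linarith)]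
  intro x hx
  obtain ⟨n, hn⟩ := exists_nat_ge x
  exact keyn n x hx (by linarith)
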